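/- Let A be a finite collection of events, where each event A ∈ A is assigned a nonempty finite variable set var(A) ⊆ [n] and a weight μ(A) ≥ 0. Call a subcollection I ⊆ A independent if the variable sets of its members are pairwise disjoint. For each A ∈ A define l(A) = (1 + μ(A))^{1/|var(A)|} − 1. Then Σ_{I independent} Π_{A∈I} μ(A) ≤ Π_{i∈[n]} ( 1 + Σ_{A∈A : i∈var(A)} l(A) ). -/

import Mathlib

open Finset

private lemma one_le_prodR {α : Type*} (s : Finset α) (f : α → ℝ)
    (h : ∀ i ∈ s, 1 ≤ f i) : 1 ≤ ∏ i ∈ s, f i := by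
  calc (1:ℝ) = ∏ _i ∈ s, 1 := by simp
    _ ≤ ∏ i ∈ s, f i := Finset.prod_le_prod (by intros; norm_num) h

private lemma superadd {α : Type*} [DecidableEq α] (t : Finset α) (a : α → ℝ) (l : ℝ)
    (ha : ∀ i ∈ t, 1 ≤ a i) (hl : 0 ≤ l) :
    (∏ i ∈ t, a i) + ∏ _i ∈ t, (1 + l) ≤ 1 + ∏ i ∈ t, (a i + l) := by
  induction t using Finset.induction_on with
  | empty => simp
  | insert _ _ hx ih =>
    rename_i x s
    have ha' : ∀ i ∈ s, 1 ≤ a i := fun i hi => ha i (mem_insert_of_mem hi)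
    have hax : 1 ≤ a x := ha x (mem_insert_self _ _)
    have h1 : (1:ℝ) ≤ ∏ i ∈ s, a i := one_le_prodR _ _ ha'
    have h2 : (1:ℝ) ≤ ∏ _i ∈ s, (1 + l) := one_le_prodR _ _ (fun i _ => by linarith)
    have h3 : (∏ _i ∈ s, (1 + l)) ≤ ∏ i ∈ s, (a i + l) :=
      prod_le_prod (fun i _ => by linarith) (fun i hi => by have := ha' i hi; linarith)
    have ih' := ih ha'
    rw [prod_insert hx, prod_insert hx, prod_insert hx]
    nlinarith [mul_le_mul_of_nonneg_left ih' (by linarith : (0:ℝ) ≤ a x)]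

theorem stmt14 {ι : Type*} [Fintype ι] [DecidableEq ι] (n : ℕ)
    (var : ι → Finset (Fin n)) (hvar : ∀ a, (var a).Nonempty)
    (μ : ι → ℝ) (hμ : ∀ a, 0 ≤ μ a) :
    (∑ I ∈ Finset.univ.filter (fun I : Finset ι =>
        ∀ a ∈ I, ∀ b ∈ I, a ≠ b → Disjoint (var a) (var b)), ∏ a ∈ I, μ a)
      ≤ ∏ i : Fin n, (1 + ∑ a ∈ Finset.univ.filter (fun a : ι => i ∈ var a),
          ((1 + μ a) ^ ((1 : ℝ) / (var a).card) - 1)) := by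
  classical
  set l : ι → ℝ := fun a => (1 + μ a) ^ ((1 : ℝ) / (var a).card) - 1 with hldef
  set P : Finset ι → Prop :=
    fun I => ∀ a ∈ I, ∀ b ∈ I, a ≠ b → Disjoint (var a) (var b) with hPdef
  have hl0 : ∀ a, 0 ≤ l a := by
    intro a
    have : (1:ℝ) ≤ (1 + μ a) ^ ((1 : ℝ) / (var a).card) :=
      Real.one_le_rpow (by linarith [hμ a]) (by positivity)
    simp only [hldef]; linarith
  have hlprod : ∀ a, ∏ _i ∈ var a, (1 + l a) = 1 + μ a := by
    intro a
    have hk : ((var a).card : ℝ) ≠ 0 := by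
      have := (hvar a).card_pos; positivity
    have h1 : (0:ℝ) ≤ 1 + μ a := by linarith [hμ a]
    have : (1 + l a) = (1 + μ a) ^ ((1 : ℝ) / (var a).card) := by
      simp only [hldef]; ring
    rw [prod_const, this, ← Real.rpow_natCast ((1 + μ a) ^ ((1 : ℝ) / (var a).card)) _,
      ← Real.rpow_mul h1]
    rw [one_div, inv_mul_cancel₀ hk, Real.rpow_one]
  -- key claim by strong induction on the event set
  have key : ∀ s : Finset ι,
      (∑ I ∈ s.powerset.filter P, ∏ a ∈ I, μ a)
        ≤ ∏ i : Fin n, (1 + ∑ a ∈ s.filter (fun a => i ∈ var a), l a) := by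
    intro s
    induction s using Finset.strongInduction with
    | _ s ih =>
      rcases s.eq_empty_or_nonempty with rfl | ⟨B, hB⟩
      · have hP : P (∅ : Finset ι) := by intro a ha; simp at ha
        simp only [Finset.powerset_empty, Finset.filter_singleton, if_pos hP,
          Finset.filter_empty, Finset.sum_empty, Finset.sum_singleton, Finset.prod_empty]
        simp
      · set s' := s.erase B with hs'def
        have hBs' : B ∉ s' := notMem_erase _ _
        have hs : s = insert B s' := (insert_erase hB).symm
        set s'' := s'.filter (fun a => Disjoint (var a) (var B)) with hs''def
        -- split the sum
        have hPins : ∀ I ⊆ s', (P (insert B I) ↔ P I ∧ ∀ a ∈ I, Disjoint (var a) (var B)) := by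
          intro I hI
          have hBI : B ∉ I := fun h => hBs' (hI h)
          constructor
          · intro h
            refine ⟨fun a ha b hb hab => h a (mem_insert_of_mem ha) b (mem_insert_of_mem hb) hab,
              fun a ha => h a (mem_insert_of_mem ha) B (mem_insert_self _ _) (fun hEq => hBI (hEq ▸ ha))⟩
          · rintro ⟨hP1, hQ⟩ a ha b hb hab
            rcases mem_insert.1 ha with rfl | ha' <;> rcases mem_insert.1 hb with rfl | hb'
            · exact absurd rfl hab
            · exact (hQ b hb').symm
            · exact hQ a ha'
            · exact hP1 a ha' b hb' hab
        have hsetEq : s'.powerset.filter (fun I => P I ∧ ∀ a ∈ I, Disjoint (var a) (var B))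
            = s''.powerset.filter P := by
          ext I
          simp only [mem_filter, mem_powerset, hs''def]
          constructor
          · rintro ⟨hI, hPI, hQ⟩
            exact ⟨fun x hx => mem_filter.2 ⟨hI hx, hQ x hx⟩, hPI⟩
          · rintro ⟨hI, hPI⟩
            exact ⟨fun x hx => (mem_filter.1 (hI hx)).1, hPI,
              fun x hx => (mem_filter.1 (hI hx)).2⟩
        have split : (∑ I ∈ s.powerset.filter P, ∏ a ∈ I, μ a)
            = (∑ I ∈ s'.powerset.filter P, ∏ a ∈ I, μ a)
              + μ B * ∑ I ∈ s''.powerset.filter P, ∏ a ∈ I, μ a := by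
          rw [hs, sum_filter, sum_filter, Finset.sum_powerset_insert hBs']
          congr 1
          rw [← hsetEq, sum_filter, mul_sum]
          refine Finset.sum_congr rfl ?_
          intro I hI
          have hI' : I ⊆ s' := mem_powerset.1 hI
          have hBI : B ∉ I := fun h => hBs' (hI' h)
          rw [prod_insert hBI]
          by_cases h : P (insert B I)
          · rw [if_pos h, if_pos ((hPins I hI').1 h)]
          · rw [if_neg h, if_neg (fun h' => h ((hPins I hI').2 h')), mul_zero]
        -- abbreviations for the column sums
        set u : Fin n → ℝ := fun i => ∑ a ∈ s'.filter (fun a => i ∈ var a), l a with hudef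
        set w : Fin n → ℝ := fun i => ∑ a ∈ s''.filter (fun a => i ∈ var a), l a with hwdef
        have hu0 : ∀ i, 0 ≤ u i := fun i => sum_nonneg (fun a _ => hl0 a)
        have hw0 : ∀ i, 0 ≤ w i := fun i => sum_nonneg (fun a _ => hl0 a)
        have hwu : ∀ i, w i ≤ u i := by
          intro i
          refine sum_le_sum_of_subset_of_nonneg ?_ (fun a _ _ => hl0 a)
          intro a ha
          simp only [hs''def, mem_filter] at ha ⊢
          exact ⟨ha.1.1, ha.2⟩
        have hwB : ∀ i ∈ var B, w i = 0 := by
          intro i hi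
          apply Finset.sum_eq_zero
          intro a ha
          simp only [hs''def, mem_filter] at ha
          exact ((Finset.disjoint_left.1 ha.1.2) ha.2 hi).elim
        -- the RHS column sums for s
        have hvcol : ∀ i : Fin n, (∑ a ∈ s.filter (fun a => i ∈ var a), l a)
            = u i + (if i ∈ var B then l B else 0) := by
          intro i
          rw [hs]
          by_cases hi : i ∈ var B
          · rw [filter_insert, if_pos hi, sum_insert (fun h => hBs' (mem_filter.1 h).1),
              if_pos hi]; ring
          · rw [filter_insert, if_neg hi, if_neg hi]; ring
        -- bound the two pieces
        have ihs' := ih s' (erase_ssubset hB)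
        have ihs'' := ih s'' (lt_of_le_of_lt (filter_subset _ _)
          ((erase_ssubset hB)))
        -- product bounds
        have hprodw : (∏ i : Fin n, (1 + w i)) ≤ ∏ i ∈ (var B)ᶜ, (1 + u i) := by
          rw [← prod_mul_prod_compl (var B) (fun i => 1 + w i)]
          have h1 : (∏ i ∈ var B, (1 + w i)) = 1 := by
            apply Finset.prod_eq_one
            intro i hi; rw [hwB i hi]; ring
          rw [h1, one_mul]
          exact prod_le_prod (fun i _ => by linarith [hw0 i]) (fun i _ => by linarith [hwu i])
        have hS2nonneg : (0:ℝ) ≤ ∑ I ∈ s''.powerset.filter P, ∏ a ∈ I, μ a :=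
          sum_nonneg (fun I _ => prod_nonneg (fun a _ => hμ a))
        rw [split]
        calc (∑ I ∈ s'.powerset.filter P, ∏ a ∈ I, μ a)
              + μ B * ∑ I ∈ s''.powerset.filter P, ∏ a ∈ I, μ a
            ≤ (∏ i : Fin n, (1 + u i)) + μ B * ∏ i ∈ (var B)ᶜ, (1 + u i) := by
              have h2 : μ B * (∑ I ∈ s''.powerset.filter P, ∏ a ∈ I, μ a)
                  ≤ μ B * ∏ i ∈ (var B)ᶜ, (1 + u i) :=
                mul_le_mul_of_nonneg_left (le_trans ihs'' hprodw) (hμ B)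
              linarith
          _ ≤ ∏ i : Fin n, (1 + ∑ a ∈ s.filter (fun a => i ∈ var a), l a) := by
              have hfac : (∏ i : Fin n, (1 + ∑ a ∈ s.filter (fun a => i ∈ var a), l a))
                  = (∏ i ∈ var B, (1 + u i + l B)) * ∏ i ∈ (var B)ᶜ, (1 + u i) := by
                rw [← prod_mul_prod_compl (var B)
                  (fun i => 1 + ∑ a ∈ s.filter (fun a => i ∈ var a), l a)]
                congr 1
                · refine Finset.prod_congr rfl (fun i hi => ?_)
                  rw [hvcol i, if_pos hi]; ring
                · refine Finset.prod_congr rfl (fun i hi => ?_)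
                  rw [hvcol i, if_neg (by simpa using hi)]; ring
              have hsplit1 : (∏ i : Fin n, (1 + u i))
                  = (∏ i ∈ var B, (1 + u i)) * ∏ i ∈ (var B)ᶜ, (1 + u i) :=
                (prod_mul_prod_compl (var B) (fun i => 1 + u i)).symm
              rw [hfac, hsplit1]
              have hC1 : (1:ℝ) ≤ ∏ i ∈ (var B)ᶜ, (1 + u i) :=
                one_le_prodR _ _ (fun i _ => by linarith [hu0 i])
              have hkeyineq : (∏ i ∈ var B, (1 + u i)) + μ B ≤ ∏ i ∈ var B, (1 + u i + l B) := by
                have := superadd (var B) (fun i => 1 + u i) (l B)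
                  (fun i _ => by linarith [hu0 i]) (hl0 B)
                rw [hlprod B] at this
                linarith
              have hC0 : (0:ℝ) ≤ ∏ i ∈ (var B)ᶜ, (1 + u i) := by linarith
              nlinarith [mul_le_mul_of_nonneg_right hkeyineq hC0]
  have := key Finset.univ
  simpa [Finset.powerset_univ, hPdef] using this
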